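/- arXiv:math/0104178 — 2 statements merged into one kernel-verified Lean document; each statement's English description precedes it below -/
import Mathlib

section
/- Assume the local setting. Then for every integer n ≥ 0, |[n]_q!|_v = |[κ_v]_q|_v^{⌊n/κ_v⌋} · |⌊n/κ_v⌋!|_v, where ⌊·⌋ is the integer part and ⌊n/κ_v⌋! is the ordinary factorial viewed in K_v. Moreover, for all integers n ≥ i ≥ 0, the Gaussian binomial coefficient satisfies |binom(n,i)_q|_v ≤ 1. -/
open Filter
open scoped ENNReal

noncomputable section

variable {Kv : Type*} [NormedField Kv]

/-- `[n]_q = 1 + q + ⋯ + q^{n-1}`. -/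
def qNat (q : Kv) (n : ℕ) : Kv := ∑ i ∈ Finset.range n, q ^ i

/-- `[n]_q! = [1]_q ⋯ [n]_q`. -/
def qFactorial (q : Kv) : ℕ → Kv
  | 0 => 1
  | n + 1 => qFactorial q n * qNat q (n + 1)

/-- The Gaussian binomial coefficient `binom(n,i)_q`. -/
def qBinom (q : Kv) (n i : ℕ) : Kv := qFactorial q n / (qFactorial q i * qFactorial q (n - i))

/-- The substitution `x ↦ qx` on rational functions. -/
def ratSubst (q : Kv) (f : RatFunc Kv) : RatFunc Kv :=
  algebraMap (Polynomial Kv) (RatFunc Kv) (f.num.comp (Polynomial.C q * Polynomial.X)) /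
    algebraMap (Polynomial Kv) (RatFunc Kv) (f.denom.comp (Polynomial.C q * Polynomial.X))

/-- The `q`-difference operator `d_q f(x) = (f(qx) - f(x))/((q-1)x)`. -/
def qDeriv (q : Kv) (f : RatFunc Kv) : RatFunc Kv :=
  (ratSubst q f - f) / (RatFunc.C (q - 1) * RatFunc.X)

/-- The Gauss norm of a polynomial: the sup of the norms of its coefficients. -/
def polyGaussNorm (P : Polynomial Kv) : ℝ := ⨆ i : ℕ, ‖P.coeff i‖

/-- The Gauss norm of a rational function. -/
def gaussNorm (f : RatFunc Kv) : ℝ := polyGaussNorm f.num / polyGaussNorm f.denom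

/-- The Gauss norm of a matrix of rational functions: max of the Gauss norms of the entries. -/
def matGaussNorm {μ : ℕ} (M : Matrix (Fin μ) (Fin μ) (RatFunc Kv)) : ℝ :=
  ⨆ i, ⨆ j, gaussNorm (M i j)

/-- The sequence of matrices `G_n`: `G_0 = 1`, `G_{n+1}(x) = G(x)·G_n(qx) + (d_q G_n)(x)`. -/
def Gseq {μ : ℕ} (q : Kv) (G : Matrix (Fin μ) (Fin μ) (RatFunc Kv)) :
    ℕ → Matrix (Fin μ) (Fin μ) (RatFunc Kv)
  | 0 => 1
  | n + 1 => G * (Gseq q G n).map (ratSubst q) + (Gseq q G n).map (qDeriv q)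

/-- `χ_v = min(1, liminf |G_n/[n]_q!|^{-1/n})`, computed in `ℝ≥0∞`. -/
def chiV {μ : ℕ} (q : Kv) (G : Matrix (Fin μ) (Fin μ) (RatFunc Kv)) : ℝ≥0∞ :=
  min 1 (Filter.liminf (fun n : ℕ =>
    (ENNReal.ofReal (matGaussNorm (Gseq q G n) / ‖qFactorial q n‖)) ^ (-(1 / (n : ℝ))))
    Filter.atTop)

lemma myaux_coprime_norm_one [IsUltrametricDist Kv] {p : ℕ} (hpv : ‖(p:Kv)‖ < 1)
    {u : ℕ} (hu : Nat.Coprime u p) : ‖(u:Kv)‖ = 1 := by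
  refine le_antisymm (IsUltrametricDist.norm_natCast_le_one Kv u) ?_
  by_contra h
  push_neg at h
  obtain ⟨a, b, hab⟩ := Nat.isCoprime_iff_coprime.mpr hu
  have hcast : ((a : Kv) * u + (b : Kv) * p) = 1 := by
    have := congrArg (fun z : ℤ => (z : Kv)) hab
    push_cast at this
    simpa using this
  have h1 : (1:ℝ) = ‖(a : Kv) * u + (b : Kv) * p‖ := by rw [hcast, norm_one]
  have h2 : ‖(a : Kv) * u + (b : Kv) * p‖ ≤ max ‖(a:Kv) * u‖ ‖(b:Kv) * p‖ :=
    IsUltrametricDist.norm_add_le_max _ _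
  have ha : ‖(a:Kv) * u‖ < 1 := by
    rw [norm_mul]
    calc ‖(a:Kv)‖ * ‖(u:Kv)‖ ≤ 1 * ‖(u:Kv)‖ := by
          exact mul_le_mul_of_nonneg_right (IsUltrametricDist.norm_intCast_le_one Kv a)
            (norm_nonneg _)
      _ = ‖(u:Kv)‖ := one_mul _
      _ < 1 := h
  have hb : ‖(b:Kv) * p‖ < 1 := by
    rw [norm_mul]
    calc ‖(b:Kv)‖ * ‖(p:Kv)‖ ≤ 1 * ‖(p:Kv)‖ := by
          exact mul_le_mul_of_nonneg_right (IsUltrametricDist.norm_intCast_le_one Kv b)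
            (norm_nonneg _)
      _ = ‖(p:Kv)‖ := one_mul _
      _ < 1 := hpv
  have := h1.trans_le h2
  rcases max_cases ‖(a:Kv) * u‖ ‖(b:Kv) * p‖ with ⟨he, _⟩ | ⟨he, _⟩ <;> rw [he] at this <;> linarith

lemma myaux_norm_nat [IsUltrametricDist Kv] {p : ℕ} (hp : p.Prime) (hpv : ‖(p:Kv)‖ < 1)
    {k : ℕ} (hk : k ≠ 0) : ‖(k:Kv)‖ = ‖(p:Kv)‖ ^ (k.factorization p) := by
  conv_lhs => rw [← Nat.ordProj_mul_ordCompl_eq_self k p]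
  push_cast
  rw [norm_mul, norm_pow, myaux_coprime_norm_one hpv ((Nat.coprime_ordCompl hp hk).symm),
    mul_one]


lemma myaux_dwork [IsUltrametricDist Kv] {p : ℕ} (hp : p.Prime) (hpv : ‖(p:Kv)‖ < 1)
    (hppos : 0 < ‖(p:Kv)‖)
    {ε : Kv} (hεne : ε ≠ 0) (hdw : ‖ε‖ < ‖(p:Kv)‖ ^ ((1:ℝ)/((p:ℝ)-1)))
    {s : ℕ} (hs : 0 < s) : ‖(1+ε)^s - 1‖ = ‖(s:Kv)‖ * ‖ε‖ := by
  set P : ℝ := ‖(p:Kv)‖ with hP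
  set r : ℝ := P ^ ((1:ℝ)/((p:ℝ)-1)) with hr
  have hp2 : 2 ≤ p := hp.two_le
  have hpR : (1:ℝ) ≤ (p:ℝ) - 1 := by
    have : (2:ℝ) ≤ (p:ℝ) := by exact_mod_cast hp2
    linarith
  have hrpos : 0 < r := Real.rpow_pos_of_pos hppos _
  have hεpos : 0 < ‖ε‖ := norm_pos_iff.mpr hεne
  have hspos : 0 < ‖(s:Kv)‖ := by
    rw [myaux_norm_nat hp hpv hs.ne']
    positivity
  -- per-term bound
  have key : ∀ k ∈ Finset.Ico 2 (s+1),
      ‖ε^k * (s.choose k : Kv)‖ ≤ (‖(s:Kv)‖ * ‖ε‖) * (‖ε‖ / r) := by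
    intro k hk
    rw [Finset.mem_Ico] at hk
    obtain ⟨hk2, hks⟩ := hk
    set v : ℕ := k.factorization p with hv
    have hkne : k ≠ 0 := by omega
    have hkn : ‖(k:Kv)‖ = P ^ v := myaux_norm_nat hp hpv hkne
    have hpvk : p ^ v ≤ k := Nat.ordProj_le p hkne
    have hvk : (v:ℝ) * ((p:ℝ) - 1) ≤ (k:ℝ) - 1 := by
      have h1 : (1:ℝ) + v * ((p:ℝ) - 1) ≤ (1 + ((p:ℝ)-1)) ^ v :=
        one_add_mul_le_pow (by linarith) v
      have h2 : ((p:ℝ)) ^ v ≤ (k:ℝ) := by exact_mod_cast hpvk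
      have h3 : (1:ℝ) + ((p:ℝ)-1) = (p:ℝ) := by ring
      rw [h3] at h1
      linarith
    have hrk : r ^ (k-1) ≤ P ^ v := by
      have e1 : r ^ (k-1) = P ^ (((1:ℝ)/((p:ℝ)-1)) * ((k:ℝ)-1)) := by
        rw [hr, ← Real.rpow_natCast (P ^ ((1:ℝ)/((p:ℝ)-1))) (k-1), ← Real.rpow_mul hppos.le]
        congr 1
        have hc : ((k - 1 : ℕ) : ℝ) = (k:ℝ) - 1 := by
          have h1 : (1:ℕ) ≤ k := by omega
          push_cast [h1]
          ring
        rw [hc]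
      have e2 : P ^ (((1:ℝ)/((p:ℝ)-1)) * ((k:ℝ)-1)) ≤ P ^ ((v:ℕ):ℝ) := by
        apply Real.rpow_le_rpow_of_exponent_ge hppos hpv.le
        rw [one_div_mul_eq_div, le_div_iff₀ (by linarith : (0:ℝ) < (p:ℝ)-1)]
        exact hvk
      rw [e1, ← Real.rpow_natCast P v]
      exact e2
    have hchoose : ‖((s.choose k : ℕ) : Kv)‖ * P ^ v ≤ ‖(s:Kv)‖ := by
      obtain ⟨s', rfl⟩ : ∃ s', s = s'+1 := ⟨s-1, by omega⟩
      obtain ⟨k', rfl⟩ : ∃ k', k = k'+1 := ⟨k-1, by omega⟩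
      have hid := Nat.add_one_mul_choose_eq s' k'
      have hcast : ((s'+1 : ℕ):Kv) * ((s'.choose k' : ℕ):Kv)
          = ((((s'+1).choose (k'+1)) : ℕ):Kv) * ((k'+1 : ℕ):Kv) := by
        exact_mod_cast congrArg (fun z : ℕ => (z : Kv)) hid
      have hnorm := congrArg norm hcast
      rw [norm_mul, norm_mul] at hnorm
      rw [← hkn, ← hnorm]
      have h1 : ‖((s'.choose k' : ℕ):Kv)‖ ≤ 1 := IsUltrametricDist.norm_natCast_le_one Kv _
      calc ‖((s'+1:ℕ):Kv)‖ * ‖((s'.choose k' : ℕ):Kv)‖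
          ≤ ‖((s'+1:ℕ):Kv)‖ * 1 := mul_le_mul_of_nonneg_left h1 (norm_nonneg _)
        _ = ‖((s'+1:ℕ):Kv)‖ := mul_one _
    have hmain : ‖ε‖ ^ (k-2) * r ≤ P ^ v := by
      have hεr : ‖ε‖ ^ (k-2) ≤ r ^ (k-2) := pow_le_pow_left₀ (norm_nonneg _) hdw.le _
      have hrr : r ^ (k-2) * r = r ^ (k-1) := by
        rw [← pow_succ]
        congr 1
        omega
      calc ‖ε‖ ^ (k-2) * r ≤ r ^ (k-2) * r := mul_le_mul_of_nonneg_right hεr hrpos.le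
        _ = r ^ (k-1) := hrr
        _ ≤ P ^ v := hrk
    have hεk : ‖ε‖ ^ k = ‖ε‖ ^ (k-2) * (‖ε‖ * ‖ε‖) := by
      rw [← pow_two, ← pow_add]
      congr 1
      omega
    rw [norm_mul, norm_pow]
    rw [show (‖(s:Kv)‖ * ‖ε‖) * (‖ε‖ / r) = (‖(s:Kv)‖ * (‖ε‖ * ‖ε‖)) / r by ring,
      le_div_iff₀ hrpos, hεk]
    have hCnn : (0:ℝ) ≤ ‖((s.choose k : ℕ) : Kv)‖ := norm_nonneg _
    nlinarith [mul_le_mul_of_nonneg_right hmain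
        (mul_nonneg (mul_nonneg (norm_nonneg ε) (norm_nonneg ε)) hCnn),
      mul_le_mul_of_nonneg_right hchoose (mul_nonneg (norm_nonneg ε) (norm_nonneg ε)),
      mul_nonneg (mul_nonneg (norm_nonneg ε) (norm_nonneg ε)) hCnn]
  -- expansion
  have hexp : (1+ε)^s - 1 = (s:Kv)*ε + ∑ k ∈ Finset.Ico 2 (s+1), ε^k * (s.choose k : Kv) := by
    rw [add_comm (1:Kv) ε, add_pow]
    simp only [one_pow, mul_one]
    rw [Finset.range_eq_Ico,
      ← Finset.sum_Ico_consecutive _ (Nat.zero_le 2) (by omega : 2 ≤ s+1)]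
    have h02 : ∑ k ∈ Finset.Ico 0 2, ε^k * (s.choose k : Kv) = 1 + (s:Kv)*ε := by
      rw [show Finset.Ico 0 2 = Finset.range 2 by rw [Finset.range_eq_Ico],
        Finset.sum_range_succ, Finset.sum_range_one]
      simp [mul_comm]
    rw [h02]
    ring
  have hT : ‖∑ k ∈ Finset.Ico 2 (s+1), ε^k * (s.choose k : Kv)‖
      ≤ (‖(s:Kv)‖ * ‖ε‖) * (‖ε‖ / r) :=
    IsUltrametricDist.norm_sum_le_of_forall_le_of_nonneg (by positivity) key
  have hfrac : ‖ε‖ / r < 1 := (div_lt_one hrpos).mpr hdw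
  have hTlt : ‖∑ k ∈ Finset.Ico 2 (s+1), ε^k * (s.choose k : Kv)‖ < ‖(s:Kv)*ε‖ := by
    rw [norm_mul]
    calc ‖∑ k ∈ Finset.Ico 2 (s+1), ε^k * (s.choose k : Kv)‖
        ≤ (‖(s:Kv)‖ * ‖ε‖) * (‖ε‖ / r) := hT
      _ < (‖(s:Kv)‖ * ‖ε‖) * 1 := by
          apply mul_lt_mul_of_pos_left hfrac
          positivity
      _ = ‖(s:Kv)‖ * ‖ε‖ := mul_one _
  rw [hexp, IsUltrametricDist.norm_add_eq_max_of_norm_ne_norm (ne_of_gt hTlt),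
    max_eq_left hTlt.le, norm_mul]


lemma myaux_geom (q : Kv) (m : ℕ) : qNat q m * (q - 1) = q ^ m - 1 := geom_sum_mul q m

lemma myaux_one_sub_le [IsUltrametricDist Kv] {q : Kv} (hq1 : ‖q‖ = 1) (m : ℕ) :
    ‖1 - q ^ m‖ ≤ 1 := by
  have h := IsUltrametricDist.norm_add_le_max (1:Kv) (-(q ^ m))
  rw [norm_one, norm_neg, norm_pow, hq1, one_pow, max_self] at h
  simpa [sub_eq_add_neg] using h

lemma myaux_small_one [IsUltrametricDist Kv] {q : Kv} (hq1 : ‖q‖ = 1)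
    {κ : ℕ} (hκmin : ∀ m : ℕ, 0 < m → ‖1 - q ^ m‖ < 1 → κ ≤ m)
    {r : ℕ} (hr : 0 < r) (hrκ : r < κ) : ‖1 - q ^ r‖ = 1 := by
  refine le_antisymm (myaux_one_sub_le hq1 r) ?_
  by_contra h
  push_neg at h
  exact absurd (hκmin r hr h) (by omega)

lemma myaux_qNat_ne_zero {q : Kv} (hqru : ∀ m : ℕ, 0 < m → q ^ m ≠ 1)
    {m : ℕ} (hm : 0 < m) : qNat q m ≠ 0 := by
  intro h
  have := myaux_geom q m
  rw [h, zero_mul] at this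
  exact hqru m hm (by linear_combination -this)

lemma myaux_pow_mul_sub_le [IsUltrametricDist Kv] {q : Kv} (hq1 : ‖q‖ = 1)
    (κ s : ℕ) : ‖q ^ (κ * s) - 1‖ ≤ ‖1 - q ^ κ‖ := by
  have hid : qNat (q ^ κ) s * (q ^ κ - 1) = q ^ (κ * s) - 1 := by
    have := myaux_geom (q ^ κ) s
    rwa [← pow_mul] at this
  rw [← hid, norm_mul, norm_sub_rev]
  have hle : ‖qNat (q ^ κ) s‖ ≤ 1 := by
    apply IsUltrametricDist.norm_sum_le_of_forall_le_of_nonneg zero_le_one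
    intro i _
    rw [← pow_mul, norm_pow, hq1, one_pow]
  calc ‖qNat (q ^ κ) s‖ * ‖1 - q ^ κ‖ ≤ 1 * ‖1 - q ^ κ‖ :=
        mul_le_mul_of_nonneg_right hle (norm_nonneg _)
    _ = ‖1 - q ^ κ‖ := one_mul _

lemma myaux_qNat_not_dvd [IsUltrametricDist Kv] {q : Kv} (hq1 : ‖q‖ = 1)
    {κ : ℕ} (hκpos : 0 < κ) (hκlt : ‖1 - q ^ κ‖ < 1)
    (hκmin : ∀ m : ℕ, 0 < m → ‖1 - q ^ m‖ < 1 → κ ≤ m)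
    {m : ℕ} (hm : 0 < m) (hnd : ¬ κ ∣ m) : ‖qNat q m‖ = 1 := by
  have hκ2 : 2 ≤ κ := by
    have h1 : κ ≠ 1 := fun h => hnd (h ▸ one_dvd m)
    omega
  have hq_one : ‖q - 1‖ = 1 := by
    rw [norm_sub_rev]
    have := myaux_small_one hq1 hκmin one_pos (by omega : 1 < κ)
    simpa using this
  set s := m / κ with hs
  set r := m % κ with hrdef
  have hr0 : 0 < r := by
    rcases Nat.eq_zero_or_pos r with h | h
    · exact absurd (Nat.dvd_of_mod_eq_zero (hrdef ▸ h)) hnd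
    · exact h
  have hrκ : r < κ := Nat.mod_lt m hκpos
  have hmr : m = κ * s + r := (Nat.div_add_mod m κ).symm
  have hdecomp : q ^ m - 1 = q ^ (κ * s) * (q ^ r - 1) + (q ^ (κ * s) - 1) := by
    rw [hmr, pow_add]
    ring
  have h4 : ‖q ^ (κ * s) * (q ^ r - 1)‖ = 1 := by
    rw [norm_mul, norm_pow, hq1, one_pow, one_mul, norm_sub_rev]
    exact myaux_small_one hq1 hκmin hr0 hrκ
  have h3 : ‖q ^ (κ * s) - 1‖ < 1 := lt_of_le_of_lt (myaux_pow_mul_sub_le hq1 κ s) hκlt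
  have hne : ‖q ^ (κ * s) * (q ^ r - 1)‖ ≠ ‖q ^ (κ * s) - 1‖ := by
    rw [h4]
    exact ne_of_gt h3
  have h5 : ‖q ^ m - 1‖ = 1 := by
    rw [hdecomp, IsUltrametricDist.norm_add_eq_max_of_norm_ne_norm hne, h4,
      max_eq_left h3.le]
  have hgeom := congrArg norm (myaux_geom q m)
  rw [norm_mul, hq_one, mul_one, h5] at hgeom
  exact hgeom

lemma myaux_qNat_dvd [IsUltrametricDist Kv] {p : ℕ} (hp : p.Prime) (hpv : ‖(p:Kv)‖ < 1)
    (hppos : 0 < ‖(p:Kv)‖)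
    {q : Kv} (hqru : ∀ m : ℕ, 0 < m → q ^ m ≠ 1)
    {κ : ℕ} (hκpos : 0 < κ)
    (hdw : ‖1 - q ^ κ‖ < ‖(p:Kv)‖ ^ ((1:ℝ)/((p:ℝ)-1)))
    {s : ℕ} (hs : 0 < s) : ‖qNat q (κ * s)‖ = ‖(s:Kv)‖ * ‖qNat q κ‖ := by
  have hεne : (q ^ κ - 1) ≠ 0 := sub_ne_zero.mpr (hqru κ hκpos)
  have hdr : ‖(1 + (q ^ κ - 1)) ^ s - 1‖ = ‖(s:Kv)‖ * ‖q ^ κ - 1‖ :=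
    myaux_dwork hp hpv hppos hεne (by rw [norm_sub_rev]; exact hdw) hs
  have hpow : (1 + (q ^ κ - 1)) ^ s = q ^ (κ * s) := by
    rw [show (1:Kv) + (q ^ κ - 1) = q ^ κ by ring, ← pow_mul]
  rw [hpow] at hdr
  have hq1ne : ‖q - 1‖ ≠ 0 := by
    simp only [ne_eq, norm_eq_zero, sub_eq_zero]
    intro h
    exact hqru 1 one_pos (by rw [pow_one, h])
  have h1 := congrArg norm (myaux_geom q (κ * s))
  have h2 := congrArg norm (myaux_geom q κ)
  rw [norm_mul] at h1 h2
  apply mul_right_cancel₀ hq1ne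
  rw [h1, hdr, ← h2]
  ring


/-- p-adic estimates of q-factorials and q-binomial coefficients. -/
theorem q_factorial_binomial_estimates
    {Kv : Type*} [NontriviallyNormedField Kv] [CompleteSpace Kv]
    (hna : ∀ x y : Kv, ‖x + y‖ ≤ max ‖x‖ ‖y‖)
    (p : ℕ) (hp : Nat.Prime p) (hpv : ‖(p : Kv)‖ < 1)
    (q : Kv) (hq1 : ‖q‖ = 1) (hqru : ∀ m : ℕ, 0 < m → q ^ m ≠ 1)
    (κ : ℕ) (hκpos : 0 < κ) (hκlt : ‖1 - q ^ κ‖ < 1)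
    (hκmin : ∀ m : ℕ, 0 < m → ‖1 - q ^ m‖ < 1 → κ ≤ m)
    (hdw : ‖1 - q ^ κ‖ < ‖(p : Kv)‖ ^ ((1 : ℝ) / ((p : ℝ) - 1)))
    : (∀ n : ℕ, ‖qFactorial q n‖ = ‖qNat q κ‖ ^ (n / κ) * ‖((n / κ).factorial : Kv)‖) ∧
      (∀ n i : ℕ, i ≤ n → ‖qBinom q n i‖ ≤ 1) := by
  haveI hU : IsUltrametricDist Kv :=
    IsUltrametricDist.isUltrametricDist_of_forall_norm_add_le_max_norm hna
  have hppos : 0 < ‖(p : Kv)‖ := by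
    rcases lt_or_eq_of_le (norm_nonneg ((p:Kv))) with h | h
    · exact h
    · exfalso
      have hexp : ((1 : ℝ) / ((p : ℝ) - 1)) ≠ 0 := by
        have h2 : (2:ℝ) ≤ (p:ℝ) := by exact_mod_cast hp.two_le
        exact one_div_ne_zero (by linarith)
      rw [← h, Real.zero_rpow hexp] at hdw
      linarith [norm_nonneg (1 - q ^ κ)]
  -- factorial formula
  have F : ∀ n : ℕ, ‖qFactorial q n‖ = ‖qNat q κ‖ ^ (n / κ) * ‖((n / κ).factorial : Kv)‖ := by
    intro n
    induction n with
    | zero => simp [qFactorial]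
    | succ n ih =>
      have hstep : ‖qFactorial q (n+1)‖ = ‖qFactorial q n‖ * ‖qNat q (n+1)‖ := by
        rw [show qFactorial q (n+1) = qFactorial q n * qNat q (n+1) from rfl, norm_mul]
      by_cases hd : κ ∣ (n+1)
      · set t := n / κ with ht
        have hdiv : (n+1)/κ = t + 1 := by
          rw [Nat.succ_div]
          simp [hd]
          rfl
        have hmul : κ * (t+1) = n + 1 := by
          have h := Nat.div_mul_cancel hd
          rw [hdiv] at h
          rw [mul_comm]
          exact h
        have hqn : ‖qNat q (n+1)‖ = ‖((t+1 : ℕ):Kv)‖ * ‖qNat q κ‖ := by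
          rw [← hmul]
          exact myaux_qNat_dvd hp hpv hppos hqru hκpos hdw (Nat.succ_pos t)
        have hfact : (((t+1).factorial : ℕ) : Kv) = ((t+1:ℕ):Kv) * ((t.factorial : ℕ):Kv) := by
          push_cast [Nat.factorial_succ]
          ring
        rw [hstep, ih, hdiv, hqn, hfact, norm_mul]
        ring
      · have hdiv : (n+1)/κ = n/κ := by
          rw [Nat.succ_div]
          simp [hd]
        have hqn : ‖qNat q (n+1)‖ = 1 :=
          myaux_qNat_not_dvd hq1 hκpos hκlt hκmin (Nat.succ_pos n) hd
        rw [hstep, ih, hdiv, hqn, mul_one]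
  refine ⟨F, ?_⟩
  -- binomial bound
  have hQpos : 0 < ‖qNat q κ‖ := norm_pos_iff.mpr (myaux_qNat_ne_zero hqru hκpos)
  have hQle : ‖qNat q κ‖ ≤ 1 := by
    apply IsUltrametricDist.norm_sum_le_of_forall_le_of_nonneg zero_le_one
    intro i _
    rw [norm_pow, hq1, one_pow]
  have hfactpos : ∀ m : ℕ, 0 < ‖((m.factorial : ℕ):Kv)‖ := by
    intro m
    rw [myaux_norm_nat hp hpv m.factorial_ne_zero]
    positivity
  intro n i hi
  set a := n / κ with ha
  set b := i / κ with hb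
  set c := (n-i)/κ with hc
  have hbc : b + c ≤ a := by
    rw [ha, Nat.le_div_iff_mul_le hκpos]
    have h1 : b * κ ≤ i := hb ▸ Nat.div_mul_le_self i κ
    have h2 : c * κ ≤ n - i := hc ▸ Nat.div_mul_le_self (n-i) κ
    have h3 : (b + c) * κ = b * κ + c * κ := add_mul b c κ
    omega
  obtain ⟨N, hN⟩ : b.factorial * c.factorial ∣ a.factorial :=
    dvd_trans (Nat.factorial_mul_factorial_dvd_factorial_add b c)
      (Nat.factorial_dvd_factorial hbc)
  have hN' : ‖((a.factorial : ℕ) : Kv)‖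
      = ‖((b.factorial : ℕ) : Kv)‖ * ‖((c.factorial : ℕ) : Kv)‖ * ‖((N:ℕ) : Kv)‖ := by
    rw [hN]
    push_cast
    rw [norm_mul, norm_mul]
  rw [qBinom, norm_div, norm_mul, F n, F i, F (n-i), ← ha, ← hb, ← hc]
  rw [div_le_one (mul_pos (mul_pos (pow_pos hQpos b) (hfactpos b))
    (mul_pos (pow_pos hQpos c) (hfactpos c))), hN']
  have hQpow : ‖qNat q κ‖ ^ a ≤ ‖qNat q κ‖ ^ (b + c) :=
    pow_le_pow_of_le_one hQpos.le hQle hbc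
  have hNle : ‖((N:ℕ) : Kv)‖ ≤ 1 := IsUltrametricDist.norm_natCast_le_one Kv N
  calc ‖qNat q κ‖ ^ a * (‖((b.factorial : ℕ) : Kv)‖ * ‖((c.factorial : ℕ) : Kv)‖ * ‖((N:ℕ) : Kv)‖)
      ≤ ‖qNat q κ‖ ^ (b+c) * (‖((b.factorial : ℕ) : Kv)‖ * ‖((c.factorial : ℕ) : Kv)‖ * 1) := by
        apply mul_le_mul hQpow
        · apply mul_le_mul_of_nonneg_left hNle
          positivity
        · positivity
        · positivity
      _ = (‖qNat q κ‖ ^ b * ‖((b.factorial : ℕ) : Kv)‖)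
          * (‖qNat q κ‖ ^ c * ‖((c.factorial : ℕ) : Kv)‖) := by
        rw [pow_add]
        ring
end
end

section
/- Assume the local setting. Let a ∈ K_v, let (a_n)_{n≥0} be a sequence in K_v, and let ρ be a real number with 0 < ρ ≤ 1. Suppose that max(ρ, |a|_v)^{1−1/κ_v} · max(ρ, |a|_v·|[κ_v]_q|_v)^{1/κ_v} < liminf_{n→∞} |a_n|_v^{−1/n}. Then for every x ∈ K_v with |x − a|_v < ρ, the series Σ_{n≥0} a_n·(x−a)(x−qa)⋯(x−q^{n−1}a) converges in K_v (its terms tend to 0, hence it is summable since K_v is complete and non-archimedean). -/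
open Filter
open scoped ENNReal

noncomputable section

variable {Kv : Type*} [NormedField Kv]

/-- Auxiliary real inequality for the comparison with a geometric series. -/
private lemma qsc_aux_real {κ n m : ℕ} {M1 M2 s : ℝ} (hM2 : 0 < M2) (hM21 : M2 ≤ M1)
    (hs : 0 < s) (hκ : 0 < κ) (hmn : m ≤ n) (hnκ : (n : ℝ) ≤ (κ : ℝ) * ((m : ℝ) + 1)) :
    s⁻¹ ^ n * (M2 ^ m * M1 ^ (n - m)) ≤
      (M1 / M2) * ((M1 ^ (1 - 1/(κ:ℝ)) * M2 ^ ((1:ℝ)/(κ:ℝ))) / s) ^ n := by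
  have hM1 : 0 < M1 := lt_of_lt_of_le hM2 hM21
  have hκR : (0:ℝ) < (κ:ℝ) := by exact_mod_cast hκ
  have hcu : (n:ℝ) / (κ:ℝ) - 1 ≤ (m:ℝ) := by
    rw [sub_le_iff_le_add, div_le_iff₀ hκR]
    nlinarith
  have hR : (0:ℝ) < M2 / M1 := div_pos hM2 hM1
  have hP : (0:ℝ) < M1 ^ (1 - 1/(κ:ℝ)) * M2 ^ ((1:ℝ)/(κ:ℝ)) := by positivity
  have key : M2 ^ ((m:ℝ)) * M1 ^ ((n:ℝ) - (m:ℝ)) ≤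
      (M1 / M2) * (M1 ^ (1 - 1/(κ:ℝ)) * M2 ^ ((1:ℝ)/(κ:ℝ))) ^ ((n:ℝ)) := by
    calc M2 ^ ((m:ℝ)) * M1 ^ ((n:ℝ) - (m:ℝ))
        = M1 ^ ((n:ℝ)) * (M2 / M1) ^ ((m:ℝ)) := by
          rw [Real.div_rpow hM2.le hM1.le, Real.rpow_sub hM1]
          ring
      _ ≤ M1 ^ ((n:ℝ)) * (M2 / M1) ^ ((n:ℝ) / (κ:ℝ) - 1) := by
          apply mul_le_mul_of_nonneg_left _ (Real.rpow_nonneg hM1.le _)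
          exact Real.rpow_le_rpow_of_exponent_ge hR ((div_le_one hM1).mpr hM21) hcu
      _ = (M1 / M2) * (M1 ^ (1 - 1/(κ:ℝ)) * M2 ^ ((1:ℝ)/(κ:ℝ))) ^ ((n:ℝ)) := by
          have hL : (0:ℝ) < M1 ^ ((n:ℝ)) * (M2 / M1) ^ ((n:ℝ) / (κ:ℝ) - 1) := by positivity
          have hRHS : (0:ℝ) <
              (M1 / M2) * (M1 ^ (1 - 1/(κ:ℝ)) * M2 ^ ((1:ℝ)/(κ:ℝ))) ^ ((n:ℝ)) := by positivity
          rw [← Real.exp_log hL, ← Real.exp_log hRHS]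
          congr 1
          rw [Real.log_mul (by positivity) (by positivity),
            Real.log_mul (by positivity) (by positivity),
            Real.log_rpow hM1, Real.log_rpow hR, Real.log_rpow hP,
            Real.log_div hM2.ne' hM1.ne', Real.log_div hM1.ne' hM2.ne',
            Real.log_mul (by positivity) (by positivity),
            Real.log_rpow hM1, Real.log_rpow hM2]
          ring
  have hcast : ((n - m : ℕ) : ℝ) = (n:ℝ) - (m:ℝ) := Nat.cast_sub hmn
  have key' : M2 ^ m * M1 ^ (n - m) ≤
      (M1 / M2) * (M1 ^ (1 - 1/(κ:ℝ)) * M2 ^ ((1:ℝ)/(κ:ℝ))) ^ n := by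
    have e1 : M2 ^ m * M1 ^ (n - m) = M2 ^ ((m:ℝ)) * M1 ^ ((n:ℝ) - (m:ℝ)) := by
      rw [← hcast, Real.rpow_natCast, Real.rpow_natCast]
    have e2 : (M1 / M2) * (M1 ^ (1 - 1/(κ:ℝ)) * M2 ^ ((1:ℝ)/(κ:ℝ))) ^ n =
        (M1 / M2) * (M1 ^ (1 - 1/(κ:ℝ)) * M2 ^ ((1:ℝ)/(κ:ℝ))) ^ ((n:ℝ)) := by
      rw [Real.rpow_natCast]
    rw [e1, e2]
    exact key
  calc s⁻¹ ^ n * (M2 ^ m * M1 ^ (n - m))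
      ≤ s⁻¹ ^ n * ((M1 / M2) * (M1 ^ (1 - 1/(κ:ℝ)) * M2 ^ ((1:ℝ)/(κ:ℝ))) ^ n) :=
        mul_le_mul_of_nonneg_left key' (by positivity)
    _ = (M1 / M2) * ((M1 ^ (1 - 1/(κ:ℝ)) * M2 ^ ((1:ℝ)/(κ:ℝ))) / s) ^ n := by
        rw [div_pow, inv_pow]
        field_simp

/-- Convergence of q-expansions. -/
theorem q_series_convergence
    {Kv : Type*} [NontriviallyNormedField Kv] [CompleteSpace Kv]
    (hna : ∀ x y : Kv, ‖x + y‖ ≤ max ‖x‖ ‖y‖)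
    (p : ℕ) (hp : Nat.Prime p) (hpv : ‖(p : Kv)‖ < 1)
    (q : Kv) (hq1 : ‖q‖ = 1) (hqru : ∀ m : ℕ, 0 < m → q ^ m ≠ 1)
    (κ : ℕ) (hκpos : 0 < κ) (hκlt : ‖1 - q ^ κ‖ < 1)
    (hκmin : ∀ m : ℕ, 0 < m → ‖1 - q ^ m‖ < 1 → κ ≤ m)
    (hdw : ‖1 - q ^ κ‖ < ‖(p : Kv)‖ ^ ((1 : ℝ) / ((p : ℝ) - 1)))
    (a : Kv) (aseq : ℕ → Kv) (ρ : ℝ) (hρ0 : 0 < ρ) (hρ1 : ρ ≤ 1)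
    (hlt : ENNReal.ofReal
        ((max ρ ‖a‖) ^ (1 - 1 / (κ : ℝ)) * (max ρ (‖a‖ * ‖qNat q κ‖)) ^ ((1 : ℝ) / (κ : ℝ))) <
      Filter.liminf (fun n : ℕ => (ENNReal.ofReal ‖aseq n‖) ^ (-(1 / (n : ℝ)))) Filter.atTop) :
    ∀ x : Kv, ‖x - a‖ < ρ →
      Summable (fun n : ℕ => aseq n * ∏ i ∈ Finset.range n, (x - q ^ i * a)) := by
  intro x hx
  have hqpow : ∀ i : ℕ, ‖q ^ i‖ = 1 := fun i => by rw [norm_pow, hq1, one_pow]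
  have hsum1 : ∀ (y : Kv), ‖y‖ ≤ 1 → ∀ m : ℕ, ‖∑ j ∈ Finset.range m, y ^ j‖ ≤ 1 := by
    intro y hy m
    induction m with
    | zero => simp
    | succ m ih =>
      rw [Finset.sum_range_succ]
      refine le_trans (hna _ _) (max_le ih ?_)
      calc ‖y ^ m‖ = ‖y‖ ^ m := norm_pow _ _
        _ ≤ 1 := pow_le_one₀ (norm_nonneg y) hy
  have h1sub : ∀ i : ℕ, ‖1 - q ^ i‖ ≤ 1 := by
    intro i
    have h := hna 1 (-(q ^ i))
    simpa [sub_eq_add_neg, hqpow i] using h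
  set M1 : ℝ := max ρ ‖a‖ with hM1def
  set M2 : ℝ := max ρ (‖a‖ * ‖qNat q κ‖) with hM2def
  have hM1pos : 0 < M1 := lt_of_lt_of_le hρ0 (le_max_left _ _)
  have hM2pos : 0 < M2 := lt_of_lt_of_le hρ0 (le_max_left _ _)
  have hqNat_le : ‖qNat q κ‖ ≤ 1 := hsum1 q (le_of_eq hq1) κ
  have hM21 : M2 ≤ M1 :=
    max_le_max le_rfl (by nlinarith [norm_nonneg a])
  have hκfac : ∀ m : ℕ, ‖1 - q ^ (κ * m)‖ ≤ ‖1 - q ^ κ‖ := by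
    intro m
    have hid : 1 - q ^ (κ * m) = (∑ j ∈ Finset.range m, (q ^ κ) ^ j) * (1 - q ^ κ) := by
      have h := geom_sum_mul (q ^ κ) m
      rw [pow_mul]
      linear_combination h
    rw [hid, norm_mul]
    nlinarith [hsum1 (q ^ κ) (le_of_eq (hqpow κ)) m, norm_nonneg (1 - q ^ κ),
      norm_nonneg (∑ j ∈ Finset.range m, (q ^ κ) ^ j)]
  have hκq : ‖1 - q ^ κ‖ ≤ ‖qNat q κ‖ := by
    have hid : 1 - q ^ κ = (qNat q κ) * (1 - q) := by
      have h := geom_sum_mul q κ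
      unfold qNat
      linear_combination h
    rw [hid, norm_mul]
    have h1q : ‖1 - q‖ ≤ 1 := by simpa using h1sub 1
    nlinarith [norm_nonneg (qNat q κ)]
  have hfac1 : ∀ i : ℕ, ‖x - q ^ i * a‖ ≤ M1 := by
    intro i
    have hid : x - q ^ i * a = (x - a) + (1 - q ^ i) * a := by ring
    rw [hid]
    refine le_trans (hna _ _) (max_le (le_trans hx.le (le_max_left _ _)) ?_)
    rw [norm_mul]
    calc ‖1 - q ^ i‖ * ‖a‖ ≤ 1 * ‖a‖ := by nlinarith [norm_nonneg a, h1sub i]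
      _ ≤ M1 := by rw [one_mul]; exact le_max_right _ _
  have hfac2 : ∀ m : ℕ, ‖x - q ^ (κ * m) * a‖ ≤ M2 := by
    intro m
    have hid : x - q ^ (κ * m) * a = (x - a) + (1 - q ^ (κ * m)) * a := by ring
    rw [hid]
    refine le_trans (hna _ _) (max_le (le_trans hx.le (le_max_left _ _)) ?_)
    rw [norm_mul]
    have h2 : ‖1 - q ^ (κ * m)‖ * ‖a‖ ≤ ‖a‖ * ‖qNat q κ‖ := by
      nlinarith [norm_nonneg a, (hκfac m).trans hκq]
    exact le_trans h2 (le_max_right _ _)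
  -- pick a threshold strictly between the two sides of `hlt`
  have hLpos : 0 < M1 ^ (1 - 1/(κ:ℝ)) * M2 ^ ((1:ℝ)/(κ:ℝ)) := by positivity
  obtain ⟨t, ht1, ht2⟩ := exists_between hlt
  have htne : t ≠ ⊤ := ht2.ne_top
  have ht0 : 0 < t := lt_of_le_of_lt zero_le ht1
  set s : ℝ := t.toReal with hsdef
  have hs0 : 0 < s := ENNReal.toReal_pos ht0.ne' htne
  have hLs : M1 ^ (1 - 1/(κ:ℝ)) * M2 ^ ((1:ℝ)/(κ:ℝ)) < s :=
    (ENNReal.ofReal_lt_iff_lt_toReal hLpos.le htne).mp ht1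
  have hev : ∀ᶠ n in Filter.atTop,
      t < (ENNReal.ofReal ‖aseq n‖) ^ (-(1 / (n : ℝ))) :=
    eventually_lt_of_lt_liminf ht2
  have hr01 : (0:ℝ) ≤ (M1 ^ (1 - 1/(κ:ℝ)) * M2 ^ ((1:ℝ)/(κ:ℝ))) / s := by positivity
  have hr1 : (M1 ^ (1 - 1/(κ:ℝ)) * M2 ^ ((1:ℝ)/(κ:ℝ))) / s < 1 := (div_lt_one hs0).mpr hLs
  have hgeom : Summable (fun n : ℕ =>
      (M1 / M2) * ((M1 ^ (1 - 1/(κ:ℝ)) * M2 ^ ((1:ℝ)/(κ:ℝ))) / s) ^ n) :=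
    (summable_geometric_of_lt_one hr01 hr1).mul_left _
  refine Summable.of_norm_bounded_eventually_nat hgeom ?_
  filter_upwards [hev, Filter.eventually_ge_atTop 1] with n hn hn1
  -- bound on ‖aseq n‖
  have hnR : (0:ℝ) < (n : ℝ) := by exact_mod_cast hn1
  have haseq : ‖aseq n‖ ≤ s⁻¹ ^ n := by
    have e0 : (ENNReal.ofReal ‖aseq n‖) ^ ((1:ℝ) / (n:ℝ)) < t⁻¹ := by
      rw [ENNReal.rpow_neg] at hn
      exact ENNReal.lt_inv_iff_lt_inv.mp hn
    have e1 : ENNReal.ofReal ‖aseq n‖ < t⁻¹ ^ ((n:ℝ)) := by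
      have h := ENNReal.rpow_lt_rpow e0 hnR
      rwa [← ENNReal.rpow_mul, one_div, inv_mul_cancel₀ hnR.ne', ENNReal.rpow_one] at h
    have hfin : t⁻¹ ^ ((n:ℝ)) ≠ ⊤ :=
      ENNReal.rpow_ne_top_of_nonneg hnR.le (by simp [ht0.ne'])
    have e2 : ‖aseq n‖ < (t⁻¹ ^ ((n:ℝ))).toReal := by
      have h := (ENNReal.toReal_lt_toReal ENNReal.ofReal_ne_top hfin).mpr e1
      rwa [ENNReal.toReal_ofReal (norm_nonneg _)] at h
    have e3 : (t⁻¹ ^ ((n:ℝ))).toReal = s⁻¹ ^ n := by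
      rw [← ENNReal.toReal_rpow, ENNReal.toReal_inv, Real.rpow_natCast]
    rw [← e3]
    exact e2.le
  -- the product bound
  set m : ℕ := (n - 1) / κ with hmdef
  have hκm : κ * m ≤ n - 1 := by
    rw [hmdef, mul_comm]; exact Nat.div_mul_le_self _ _
  have hmn : m ≤ n := le_trans (le_trans (Nat.div_le_self _ _) (Nat.sub_le _ _)) le_rfl
  have hnκm : n ≤ κ * (m + 1) := by
    have h1 : κ * m + (n - 1) % κ = n - 1 := by rw [hmdef]; exact Nat.div_add_mod _ _
    have h2 := Nat.mod_lt (n - 1) hκpos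
    have h3 : κ * (m + 1) = κ * m + κ := by ring
    omega
  set S : Finset ℕ := (Finset.range m).image (fun j => κ * (j + 1)) with hSdef
  have hScard : S.card = m := by
    rw [hSdef]
    rw [Finset.card_image_of_injective _ (fun j1 j2 h => by
      simpa [Nat.mul_left_cancel_iff hκpos] using h)]
    exact Finset.card_range m
  have hSsub : S ⊆ Finset.range n := by
    intro i hi
    rw [hSdef, Finset.mem_image] at hi
    obtain ⟨j, hj, rfl⟩ := hi
    rw [Finset.mem_range] at hj ⊢
    have : κ * (j + 1) ≤ κ * m := Nat.mul_le_mul_left κ hj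
    omega
  have hprodS : ∏ i ∈ S, ‖x - q ^ i * a‖ ≤ M2 ^ m := by
    calc ∏ i ∈ S, ‖x - q ^ i * a‖ ≤ ∏ i ∈ S, M2 := by
          refine Finset.prod_le_prod (fun i _ => norm_nonneg _) (fun i hi => ?_)
          rw [hSdef, Finset.mem_image] at hi
          obtain ⟨j, _, rfl⟩ := hi
          exact hfac2 (j + 1)
      _ = M2 ^ m := by rw [Finset.prod_const, hScard]
  have hprodC : ∏ i ∈ Finset.range n \ S, ‖x - q ^ i * a‖ ≤ M1 ^ (n - m) := by
    calc ∏ i ∈ Finset.range n \ S, ‖x - q ^ i * a‖ ≤ ∏ i ∈ Finset.range n \ S, M1 :=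
          Finset.prod_le_prod (fun i _ => norm_nonneg _) (fun i _ => hfac1 i)
      _ = M1 ^ (n - m) := by
          rw [Finset.prod_const, Finset.card_sdiff_of_subset hSsub, Finset.card_range, hScard]
  have hprod : ∏ i ∈ Finset.range n, ‖x - q ^ i * a‖ ≤ M2 ^ m * M1 ^ (n - m) := by
    rw [← Finset.prod_sdiff hSsub]
    have h1 : (0:ℝ) ≤ ∏ i ∈ Finset.range n \ S, ‖x - q ^ i * a‖ :=
      Finset.prod_nonneg (fun i _ => norm_nonneg _)
    have h2 : (0:ℝ) ≤ ∏ i ∈ S, ‖x - q ^ i * a‖ :=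
      Finset.prod_nonneg (fun i _ => norm_nonneg _)
    calc (∏ i ∈ Finset.range n \ S, ‖x - q ^ i * a‖) * ∏ i ∈ S, ‖x - q ^ i * a‖
        ≤ M1 ^ (n - m) * M2 ^ m := by
          apply mul_le_mul hprodC hprodS h2 (by positivity)
      _ = M2 ^ m * M1 ^ (n - m) := mul_comm _ _
  -- combine
  have hnorm : ‖aseq n * ∏ i ∈ Finset.range n, (x - q ^ i * a)‖ =
      ‖aseq n‖ * ∏ i ∈ Finset.range n, ‖x - q ^ i * a‖ := by
    rw [norm_mul, norm_prod]
  rw [hnorm]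
  calc ‖aseq n‖ * ∏ i ∈ Finset.range n, ‖x - q ^ i * a‖
      ≤ s⁻¹ ^ n * (M2 ^ m * M1 ^ (n - m)) := by
        apply mul_le_mul haseq hprod (Finset.prod_nonneg (fun i _ => norm_nonneg _))
          (by positivity)
    _ ≤ (M1 / M2) * ((M1 ^ (1 - 1/(κ:ℝ)) * M2 ^ ((1:ℝ)/(κ:ℝ))) / s) ^ n :=
        qsc_aux_real hM2pos hM21 hs0 hκpos hmn (by exact_mod_cast hnκm)
end
end
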